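/- Let A ⊆ ℝ be open and invex w.r.t. η satisfying Condition C, a, b ∈ A with a < a + η(b,a). Let f : A → ℝ be differentiable with f' integrable on [a, a+η(b,a)], and suppose |f'|^q is preinvex on [a, a+η(b,a)] for some q > 1 with 1/p + 1/q = 1. Then for all x ∈ [a, a+η(b,a)], |f(x) - (1/η(b,a)) ∫_a^{a+η(b,a)} f(u) du| ≤ (1/(p+1))^{1/p} { ((x-a)²/η(b,a)) ((|f'(a)|^q + |f'(x)|^q)/2)^{1/q} + ((a+η(b,a)-x)²/η(b,a)) ((|f'(a+η(b,a))|^q + |f'(x)|^q)/2)^{1/q} }. -/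

import Mathlib

open MeasureTheory intervalIntegral Set

lemma ostrowski_aux_holder
    (p q : ℝ) (hp : 1 < p) (hq : 1 < q) (hpq : 1 / p + 1 / q = 1)
    (c d Mc Md : ℝ) (hcd : c < d) (φ w : ℝ → ℝ)
    (hφ : IntervalIntegrable φ volume c d)
    (hw_cont : ContinuousOn w (Icc c d))
    (hw_nonneg : ∀ u ∈ Icc c d, 0 ≤ w u)
    (hwp : ∫ u in c..d, w u ^ p = (d - c) ^ (p + 1) / (p + 1))
    (hMc : 0 ≤ Mc) (hMd : 0 ≤ Md)
    (hbnd : ∀ u ∈ Icc c d, |φ u| ^ q ≤ ((d - u) * Mc + (u - c) * Md) / (d - c)) :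
    ∫ u in c..d, w u * |φ u| ≤
      (1 / (p + 1)) ^ (1 / p) * (d - c) ^ 2 * ((Mc + Md) / 2) ^ (1 / q) := by
  have hq0 : (0:ℝ) < q := by linarith
  have hp0 : (0:ℝ) < p := by linarith
  have hdc : (0:ℝ) < d - c := by linarith
  have hconj : p.HolderConjugate q := Real.holderConjugate_iff.mpr ⟨hp, by rw [← one_div, ← one_div]; exact hpq⟩
  have hφir : IntegrableOn φ (Ioc c d) volume :=
    (intervalIntegrable_iff_integrableOn_Ioc_of_le hcd.le).mp hφ
  have hφm : AEStronglyMeasurable φ (volume.restrict (Ioc c d)) := hφir.aestronglyMeasurable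
  set K := max Mc Md with hKdef
  have hK0 : 0 ≤ K := le_trans hMc (le_max_left _ _)
  have hbK : ∀ u ∈ Icc c d, |φ u| ≤ K ^ (1/q) := by
    intro u hu
    have h1 : |φ u| ^ q ≤ K := by
      refine (hbnd u hu).trans ?_
      rw [div_le_iff₀ hdc]
      have h2 := le_max_left Mc Md
      have h3 := le_max_right Mc Md
      nlinarith [hu.1, hu.2]
    calc |φ u| = (|φ u| ^ q) ^ (1/q) := by
          rw [← Real.rpow_mul (abs_nonneg _), mul_one_div_cancel (ne_of_gt hq0),
            Real.rpow_one]
      _ ≤ K ^ (1/q) := Real.rpow_le_rpow (Real.rpow_nonneg (abs_nonneg _) _) h1 (by positivity)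
  have hφmem : MemLp φ (ENNReal.ofReal q) (volume.restrict (Ioc c d)) := by
    refine MemLp.of_bound hφm (K ^ (1/q)) ?_
    filter_upwards [ae_restrict_mem measurableSet_Ioc] with u hu
    rw [Real.norm_eq_abs]; exact hbK u (Ioc_subset_Icc_self hu)
  have habs : MemLp (fun u => |φ u|) (ENNReal.ofReal q) (volume.restrict (Ioc c d)) := by
    simpa [Real.norm_eq_abs] using hφmem.norm
  have hwm : AEStronglyMeasurable w (volume.restrict (Ioc c d)) :=
    (hw_cont.mono Ioc_subset_Icc_self).aestronglyMeasurable measurableSet_Ioc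
  obtain ⟨Cw, hCw⟩ := (isCompact_Icc : IsCompact (Icc c d)).exists_bound_of_continuousOn hw_cont
  have hwmem : MemLp w (ENNReal.ofReal p) (volume.restrict (Ioc c d)) := by
    refine MemLp.of_bound hwm Cw ?_
    filter_upwards [ae_restrict_mem measurableSet_Ioc] with u hu
    exact hCw u (Ioc_subset_Icc_self hu)
  have hH := integral_mul_le_Lp_mul_Lq_of_nonneg hconj (f := w) (g := fun u => |φ u|)
    (by filter_upwards [ae_restrict_mem measurableSet_Ioc] with u hu
        exact hw_nonneg u (Ioc_subset_Icc_self hu))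
    (Filter.Eventually.of_forall fun u => abs_nonneg _) hwmem habs
  -- convert set integrals to interval integrals
  rw [integral_of_le hcd.le]
  refine hH.trans ?_
  -- second factor bound
  have hIq : ∫ u in Ioc c d, |φ u| ^ q ≤ (d - c) * ((Mc + Md) / 2) := by
    have hint1 : IntegrableOn (fun u => |φ u| ^ q) (Ioc c d) volume := by
      have h := hφmem.integrable_norm_rpow (by simp [ENNReal.ofReal_eq_zero]; linarith)
        ENNReal.ofReal_ne_top
      simpa [Real.norm_eq_abs, ENNReal.toReal_ofReal hq0.le, IntegrableOn] using h
    have hcont2 : Continuous (fun u : ℝ => ((d - u) * Mc + (u - c) * Md) / (d - c)) := by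
      fun_prop
    have hint2 : IntegrableOn (fun u : ℝ => ((d - u) * Mc + (u - c) * Md) / (d - c))
        (Ioc c d) volume := hcont2.integrableOn_Ioc
    have hmono := setIntegral_mono_on hint1 hint2 measurableSet_Ioc
      (fun u hu => hbnd u (Ioc_subset_Icc_self hu))
    refine hmono.trans ?_
    rw [← integral_of_le hcd.le]
    have hrw : (fun u : ℝ => ((d - u) * Mc + (u - c) * Md) / (d - c)) =
        fun u : ℝ => ((Md - Mc) / (d - c)) * u + ((d * Mc - c * Md) / (d - c)) := by
      funext u; field_simp; ring
    rw [hrw]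
    have hA : IntervalIntegrable (fun u : ℝ => (Md - Mc) / (d - c) * u) volume c d := by
      apply Continuous.intervalIntegrable; fun_prop
    rw [integral_add hA intervalIntegrable_const, intervalIntegral.integral_const_mul, integral_id,
      intervalIntegral.integral_const, smul_eq_mul]
    have : (Md - Mc) / (d - c) * ((d ^ 2 - c ^ 2) / 2) + (d - c) * ((d * Mc - c * Md) / (d - c))
        = (d - c) * ((Mc + Md) / 2) := by field_simp; ring
    linarith [this]
  have hfac1 : (∫ u in Ioc c d, w u ^ p) = (d - c) ^ (p + 1) / (p + 1) := by
    rw [← integral_of_le hcd.le]; exact hwp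
  rw [hfac1]
  have hfac2 : (∫ u in Ioc c d, |φ u| ^ q) ^ (1/q) ≤ ((d - c) * ((Mc + Md) / 2)) ^ (1/q) :=
    Real.rpow_le_rpow (setIntegral_nonneg measurableSet_Ioc
      (fun u _ => Real.rpow_nonneg (abs_nonneg _) _)) hIq (by positivity)
  have hfirst : (0:ℝ) ≤ ((d - c) ^ (p + 1) / (p + 1)) ^ (1/p) := by positivity
  refine (mul_le_mul_of_nonneg_left hfac2 hfirst).trans (le_of_eq ?_)
  -- final algebra
  have hp1 : (0:ℝ) < p + 1 := by linarith
  have hexp : (p + 1) * (1/p) + 1/q = 2 := by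
    have hpne : p ≠ 0 := ne_of_gt hp0
    have hqne : q ≠ 0 := ne_of_gt hq0
    field_simp at hpq ⊢
    nlinarith [hpq]
  have key : ((d - c) ^ (p + 1)) ^ (1/p) * (d - c) ^ (1/q) = (d - c) ^ 2 := by
    rw [← Real.rpow_mul hdc.le, ← Real.rpow_add hdc, hexp]
    rw [show ((2:ℝ) = ((2:ℕ):ℝ)) by norm_num, Real.rpow_natCast]
  have step1 : ((d - c) ^ (p + 1) / (p + 1)) ^ (1/p) * ((d - c) * ((Mc + Md) / 2)) ^ (1/q)
      = ((d - c) ^ (p + 1)) ^ (1/p) * ((p+1)⁻¹) ^ (1/p) * ((d - c) ^ (1/q) * ((Mc + Md) / 2) ^ (1/q)) := by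
    rw [div_eq_mul_inv, Real.mul_rpow (by positivity) (by positivity),
      Real.mul_rpow hdc.le (by positivity)]
  rw [step1, one_div, ← key]; ring

theorem ostrowski_preinvex_holder
    (A : Set ℝ) (η : ℝ → ℝ → ℝ) (a b p q : ℝ) (f f' : ℝ → ℝ)
    (hA : IsOpen A)
    (hinv : ∀ x ∈ A, ∀ y ∈ A, ∀ t ∈ Icc (0:ℝ) 1, x + t * η y x ∈ A)
    (hC : ∀ x ∈ A, ∀ y ∈ A, ∀ t ∈ Icc (0:ℝ) 1,
      η y (y + t * η x y) = -t * η x y ∧ η x (y + t * η x y) = (1 - t) * η x y)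
    (ha : a ∈ A) (hb : b ∈ A) (hab : a < a + η b a)
    (hf : ∀ x ∈ A, HasDerivAt f (f' x) x)
    (hint : IntervalIntegrable f' volume a (a + η b a))
    (hq : 1 < q) (hpq : 1 / p + 1 / q = 1)
    (hpre : ∀ x ∈ Icc a (a + η b a), ∀ y ∈ Icc a (a + η b a), ∀ t ∈ Icc (0:ℝ) 1,
      |f' (x + t * η y x)| ^ q ≤ (1 - t) * |f' x| ^ q + t * |f' y| ^ q) :
    ∀ x ∈ Icc a (a + η b a),
      |f x - (1 / η b a) * ∫ u in a..(a + η b a), f u| ≤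
        (1 / (p + 1)) ^ (1 / p) *
          (((x - a) ^ 2 / η b a) * ((|f' a| ^ q + |f' x| ^ q) / 2) ^ (1 / q) +
           ((a + η b a - x) ^ 2 / η b a) *
             ((|f' (a + η b a)| ^ q + |f' x| ^ q) / 2) ^ (1 / q)) := by
  intro x hx
  set L := a + η b a with hL
  have hh : 0 < η b a := by linarith
  have hhne : η b a ≠ 0 := ne_of_gt hh
  have hq0 : (0:ℝ) < q := by linarith
  have hiq : 1 / q < 1 := by rw [div_lt_one hq0]; exact hq
  have hiq0 : 0 < 1 / q := by positivity
  have hip : 0 < 1 / p := by linarith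
  have hp0 : 0 < p := by
    rcases lt_trichotomy p 0 with h | h | h
    · exfalso; have : 1 / p < 0 := div_neg_of_pos_of_neg one_pos h; linarith
    · exfalso; rw [h] at hip; simp at hip
    · exact h
  have hp : 1 < p := by
    by_contra hle
    push_neg at hle
    have : 1 ≤ 1 / p := by rw [le_div_iff₀ hp0]; nlinarith
    linarith
  have hmem : ∀ u ∈ Icc a L, u ∈ A := by
    intro u hu
    have ht : (u - a) / η b a ∈ Icc (0:ℝ) 1 :=
      ⟨div_nonneg (by linarith [hu.1]) hh.le, (div_le_one hh).2 (by
        have := hu.2; rw [hL] at this; linarith)⟩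
    have h2 := hinv a ha b hb _ ht
    have heq : a + (u - a) / η b a * η b a = u := by field_simp; ring
    rwa [heq] at h2
  have hxI : x ∈ Icc a L := hx
  have haI : a ∈ Icc a L := ⟨le_refl a, by rw [hL]; linarith⟩
  have hLI : L ∈ Icc a L := ⟨by rw [hL]; linarith, le_refl L⟩
  have hxA : x ∈ A := hmem x hx
  set t := (x - a) / η b a with htdef
  have htI : t ∈ Icc (0:ℝ) 1 := ⟨div_nonneg (by linarith [hx.1]) hh.le,
    (div_le_one hh).2 (by have := hx.2; rw [hL] at this; linarith)⟩
  have hxt : a + t * η b a = x := by rw [htdef]; field_simp; ring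
  have hCab := hC b hb a ha t htI
  have hax : η a x = -(x - a) := by
    have h1 := hCab.1; rw [hxt] at h1; rw [h1, htdef]; field_simp
  have hbx : η b x = L - x := by
    have h1 := hCab.2; rw [hxt] at h1; rw [h1, htdef, hL]; field_simp; ring
  have hxL : η x L = -(L - x) := by
    have h1 := (hC b hb x hxA 1 ⟨zero_le_one, le_refl 1⟩).1
    rw [hbx] at h1
    have h2 : x + 1 * (L - x) = L := by ring
    rw [h2] at h1; rw [h1]; ring
  have hfd : ∀ u ∈ Icc a L, HasDerivAt f (f' u) u := fun u hu => hf u (hmem u hu)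
  have hfc : ContinuousOn f (Icc a L) := fun u hu =>
    ((hfd u hu).continuousAt).continuousWithinAt
  have hsub1 : uIcc a x ⊆ Icc a L := by
    rw [uIcc_of_le hx.1]; exact Icc_subset_Icc (le_refl _) hx.2
  have hsub2 : uIcc x L ⊆ Icc a L := by
    rw [uIcc_of_le hx.2]; exact Icc_subset_Icc hx.1 (le_refl _)
  have hfi1 : IntervalIntegrable f volume a x := (hfc.mono hsub1).intervalIntegrable
  have hfi2 : IntervalIntegrable f volume x L := (hfc.mono hsub2).intervalIntegrable
  have huIccaL : uIcc a L = Icc a L := uIcc_of_le (by rw [hL]; linarith)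
  have hf'1 : IntervalIntegrable f' volume a x := hint.mono_set (by rw [huIccaL]; exact hsub1)
  have hf'2 : IntervalIntegrable f' volume x L := hint.mono_set (by rw [huIccaL]; exact hsub2)
  have hI1 : ∫ u in a..x, (u - a) * f' u = (x - a) * f x - ∫ u in a..x, f u := by
    have h := integral_mul_deriv_eq_deriv_mul (u := fun u => u - a) (u' := fun _ => (1:ℝ))
      (v := f) (v' := f') (fun y _ => (hasDerivAt_id y).sub_const a)
      (fun y hy => hfd y (hsub1 hy)) intervalIntegrable_const hf'1
    simp only [one_mul, sub_self, zero_mul, sub_zero] at h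
    linarith [h]
  have hI2 : ∫ u in x..L, (u - L) * f' u = (L - x) * f x - ∫ u in x..L, f u := by
    have h := integral_mul_deriv_eq_deriv_mul (u := fun u => u - L) (u' := fun _ => (1:ℝ))
      (v := f) (v' := f') (fun y _ => (hasDerivAt_id y).sub_const L)
      (fun y hy => hfd y (hsub2 hy)) intervalIntegrable_const hf'2
    simp only [one_mul, sub_self, zero_mul, zero_sub] at h
    linarith [h]
  have hsplit : (∫ u in a..x, f u) + (∫ u in x..L, f u) = ∫ u in a..L, f u :=
    integral_add_adjacent_intervals hfi1 hfi2
  have key : f x - (1 / η b a) * ∫ u in a..L, f u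
      = (1 / η b a) * ((∫ u in a..x, (u - a) * f' u) + (∫ u in x..L, (u - L) * f' u)) := by
    rw [hI1, hI2, ← hsplit, hL]
    field_simp
    ring
  have side1 : |∫ u in a..x, (u - a) * f' u| ≤
      (1 / (p + 1)) ^ (1 / p) * (x - a) ^ 2 * ((|f' a| ^ q + |f' x| ^ q) / 2) ^ (1 / q) := by
    rcases eq_or_lt_of_le hx.1 with heq | hlt
    · rw [← heq]
      simp [integral_same]
    · have habs_le : |∫ u in a..x, (u - a) * f' u| ≤ ∫ u in a..x, (u - a) * |f' u| := by
        refine (abs_integral_le_integral_abs hx.1).trans_eq ?_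
        apply integral_congr
        intro u hu
        rw [uIcc_of_le hx.1] at hu
        show |(u - a) * f' u| = (u - a) * |f' u|
        rw [abs_mul, abs_of_nonneg (by linarith [hu.1] : (0:ℝ) ≤ u - a)]
      refine habs_le.trans ?_
      refine ostrowski_aux_holder p q hp hq hpq a x (|f' a| ^ q) (|f' x| ^ q) hlt f'
        (fun u => u - a) hf'1 (by fun_prop) (fun u hu => by show (0:ℝ) ≤ u - a; linarith [hu.1]) ?_
        (by positivity) (by positivity) ?_
      · have h1 := integral_comp_sub_right (a := a) (b := x) (fun u => u ^ p) a
        rw [h1, sub_self, integral_rpow (Or.inl (by linarith : (-1:ℝ) < p))]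
        rw [Real.zero_rpow (by linarith : p + 1 ≠ 0)]
        ring
      · intro u hu
        set s := (x - u) / (x - a) with hs
        have hxa : (0:ℝ) < x - a := by linarith
        have hsI : s ∈ Icc (0:ℝ) 1 := ⟨div_nonneg (by linarith [hu.2]) hxa.le,
          (div_le_one hxa).2 (by linarith [hu.1])⟩
        have hb1 := hpre x hxI a haI s hsI
        rw [hax] at hb1
        have heq2 : x + s * -(x - a) = u := by rw [hs]; field_simp; ring
        rw [heq2] at hb1
        refine hb1.trans (le_of_eq ?_)
        rw [hs]; field_simp; ring
  have side2 : |∫ u in x..L, (u - L) * f' u| ≤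
      (1 / (p + 1)) ^ (1 / p) * (L - x) ^ 2 * ((|f' L| ^ q + |f' x| ^ q) / 2) ^ (1 / q) := by
    rcases eq_or_lt_of_le hx.2 with heq | hlt
    · rw [heq]
      simp [integral_same]
    · have habs_le : |∫ u in x..L, (u - L) * f' u| ≤ ∫ u in x..L, (L - u) * |f' u| := by
        refine (abs_integral_le_integral_abs hx.2).trans_eq ?_
        apply integral_congr
        intro u hu
        rw [uIcc_of_le hx.2] at hu
        show |(u - L) * f' u| = (L - u) * |f' u|
        rw [abs_mul, abs_of_nonpos (by linarith [hu.2] : u - L ≤ 0)]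
        ring
      refine habs_le.trans ?_
      have hmain := ostrowski_aux_holder p q hp hq hpq x L (|f' x| ^ q) (|f' L| ^ q) hlt f'
        (fun u => L - u) hf'2 (by fun_prop) (fun u hu => by show (0:ℝ) ≤ L - u; linarith [hu.2]) ?_
        (by positivity) (by positivity) ?_
      · refine hmain.trans (le_of_eq ?_)
        rw [add_comm (|f' x| ^ q)]
      · have h1 := integral_comp_sub_left (a := x) (b := L) (fun u => u ^ p) L
        rw [h1, sub_self, integral_rpow (Or.inl (by linarith : (-1:ℝ) < p))]
        rw [Real.zero_rpow (by linarith : p + 1 ≠ 0)]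
        ring
      · intro u hu
        set s := (L - u) / (L - x) with hs
        have hxa : (0:ℝ) < L - x := by linarith
        have hsI : s ∈ Icc (0:ℝ) 1 := ⟨div_nonneg (by linarith [hu.2]) hxa.le,
          (div_le_one hxa).2 (by linarith [hu.1])⟩
        have hb1 := hpre L hLI x hxI s hsI
        rw [hxL] at hb1
        have heq2 : L + s * -(L - x) = u := by rw [hs]; field_simp; ring
        rw [heq2] at hb1
        refine hb1.trans (le_of_eq ?_)
        rw [hs]; field_simp; ring
  rw [key, abs_mul, abs_of_nonneg (by positivity : (0:ℝ) ≤ 1 / η b a)]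
  have htri := (abs_add_le (∫ u in a..x, (u - a) * f' u) (∫ u in x..L, (u - L) * f' u)).trans
    (add_le_add side1 side2)
  refine (mul_le_mul_of_nonneg_left htri (by positivity : (0:ℝ) ≤ 1 / η b a)).trans (le_of_eq ?_)
  field_simp
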